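/- arXiv:1602.02142 — 2 statements merged into one kernel-verified Lean document; each statement's English description precedes it below -/
import Mathlib

section
/- Suppose for all finite A ⊆ F_p and X ⊆ F_p \ {0} with |A|²|X| ≤ p², one has ∑_{x ∈ X} E_+(A, xA) ≤ C(|A|³|X|^{3/4} + |A|^{5/2}|X|) for an absolute constant C. Then for any such A, and any K satisfying K ≤ (p/|A|)·c₁ and K ≤ c₂|A|^{1/2} for suitable absolute constants c₁, c₂ > 0 (depending on C), the set X = {ξ ∈ F_p \ {0} : E_+(A, ξA) > |A|³/K} has size at most C'K⁴ for an absolute constant C'. -/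
open Finset

/-- `E₊(A, ξA)`: number of quadruples `(a₁,a₂,a₃,a₄) ∈ A⁴` with `a₁ - a₂ = ξ(a₃ - a₄)`. -/
def addEnergy {p : ℕ} (A : Finset (ZMod p)) (ξ : ZMod p) : ℕ :=
  ((A ×ˢ A ×ˢ A ×ˢ A).filter
    (fun q => q.1 - q.2.1 = ξ * (q.2.2.1 - q.2.2.2))).card


lemma pairs_eq_sum_sq {α β : Type*} [DecidableEq β] [Fintype β] [DecidableEq α]
    (S : Finset α) (g : α → β) :
    ((S ×ˢ S).filter (fun uv => g uv.1 = g uv.2)).card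
      = ∑ s : β, ((S.filter (fun u => g u = s)).card) ^ 2 := by
  rw [Finset.card_eq_sum_card_fiberwise (f := fun uv => g uv.1) (t := Finset.univ)
    (fun _ _ => Finset.mem_univ _)]
  refine Finset.sum_congr rfl fun s _ => ?_
  rw [Finset.filter_filter]
  have h : (((S ×ˢ S)).filter fun uv => (g uv.1 = g uv.2) ∧ g uv.1 = s)
      = (S.filter fun u => g u = s) ×ˢ (S.filter fun u => g u = s) := by
    ext uv
    simp only [Finset.mem_filter, Finset.mem_product]
    constructor
    · rintro ⟨⟨h1, h2⟩, h3, h4⟩; exact ⟨⟨h1, h4⟩, h2, h4 ▸ h3 ▸ rfl⟩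
    · rintro ⟨⟨h1, h2⟩, h3, h4⟩; exact ⟨⟨h1, h3⟩, h2.trans h4.symm, h2⟩
  rw [h, Finset.card_product]; ring

lemma addEnergy_eq {p : ℕ} [NeZero p] (A : Finset (ZMod p)) (ξ : ZMod p) :
    addEnergy A ξ = ∑ s : ZMod p,
      (((A ×ˢ A).filter (fun ab => ab.1 - ξ * ab.2 = s)).card) ^ 2 := by
  rw [← pairs_eq_sum_sq (A ×ˢ A) (fun ab => ab.1 - ξ * ab.2)]
  unfold _root_.addEnergy
  apply Finset.card_bij (fun q _ => ((q.1, q.2.2.1), (q.2.1, q.2.2.2)))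
  · intro q hq
    simp only [mem_filter, mem_product] at hq ⊢
    refine ⟨⟨⟨hq.1.1, hq.1.2.2.1⟩, hq.1.2.1, hq.1.2.2.2⟩, ?_⟩
    linear_combination hq.2
  · intro q hq q' hq' h
    simp only [Prod.mk.injEq] at h
    obtain ⟨⟨h1, h2⟩, h3, h4⟩ := h
    exact Prod.ext h1 (Prod.ext h3 (Prod.ext h2 h4))
  · intro uv huv
    simp only [mem_filter, mem_product] at huv
    refine ⟨(uv.1.1, uv.2.1, uv.1.2, uv.2.2), ?_, rfl⟩
    simp only [mem_filter, mem_product]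
    exact ⟨⟨huv.1.1.1, huv.1.2.1, huv.1.1.2, huv.1.2.2⟩, by linear_combination huv.2⟩

lemma sum_fiber {p : ℕ} (A : Finset (ZMod p)) (ξ : ZMod p) [NeZero p] :
    ∑ s : ZMod p, ((A ×ˢ A).filter (fun ab => ab.1 - ξ * ab.2 = s)).card = A.card ^ 2 := by
  rw [show A.card ^ 2 = (A ×ˢ A).card from by rw [Finset.card_product]; ring]
  exact (Finset.card_eq_sum_card_fiberwise (f := fun ab : ZMod p × ZMod p => ab.1 - ξ * ab.2)
    (fun _ _ => Finset.mem_univ _)).symm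

lemma le_addEnergy {p : ℕ} [NeZero p] (A : Finset (ZMod p)) (ξ : ZMod p) :
    ((A.card : ℝ)) ^ 4 ≤ (p : ℝ) * (addEnergy A ξ : ℝ) := by
  have h := sq_sum_le_card_mul_sum_sq (s := (Finset.univ : Finset (ZMod p)))
    (f := fun s => (((A ×ˢ A).filter (fun ab => ab.1 - ξ * ab.2 = s)).card : ℝ))
  have h1 : ∑ s : ZMod p,
      (((A ×ˢ A).filter (fun ab => ab.1 - ξ * ab.2 = s)).card : ℝ) = (A.card : ℝ) ^ 2 := by
    rw [← Nat.cast_sum]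
    exact_mod_cast congrArg (Nat.cast (R := ℝ)) (sum_fiber A ξ)
  have h2 : ∑ s : ZMod p,
      (((A ×ˢ A).filter (fun ab => ab.1 - ξ * ab.2 = s)).card : ℝ) ^ 2
        = (addEnergy A ξ : ℝ) := by
    rw [addEnergy_eq A ξ]; push_cast; rfl
  rw [h1, h2, Finset.card_univ, ZMod.card] at h
  nlinarith [h]

lemma sum_addEnergy_le {p : ℕ} [NeZero p] [Fact p.Prime] (A : Finset (ZMod p)) :
    ∑ ξ : ZMod p, addEnergy A ξ ≤ A.card ^ 4 + p * A.card ^ 2 := by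
  have hrw : ∀ ξ : ZMod p, addEnergy A ξ = ∑ q ∈ (A ×ˢ A ×ˢ A ×ˢ A),
      if q.1 - q.2.1 = ξ * (q.2.2.1 - q.2.2.2) then 1 else 0 := by
    intro ξ; rw [_root_.addEnergy, Finset.card_filter]
  simp only [hrw]
  rw [Finset.sum_comm]
  have hb : ∀ q ∈ (A ×ˢ A ×ˢ A ×ˢ A : Finset _),
      (∑ ξ : ZMod p, if q.1 - q.2.1 = ξ * (q.2.2.1 - q.2.2.2) then 1 else 0)
        ≤ if q.1 = q.2.1 ∧ q.2.2.1 = q.2.2.2 then p else 1 := by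
    intro q _
    rw [← Finset.card_filter]
    by_cases hd : q.2.2.1 = q.2.2.2
    · by_cases he : q.1 = q.2.1
      · simp only [he, hd, and_self, if_true]
        calc _ ≤ (Finset.univ : Finset (ZMod p)).card := Finset.card_filter_le _ _
          _ = p := by rw [Finset.card_univ, ZMod.card]
      · have h1 : (if q.1 = q.2.1 ∧ q.2.2.1 = q.2.2.2 then p else 1) = 1 := by
          simp [he]
        rw [h1]
        have h2 : (Finset.univ.filter fun ξ : ZMod p =>
            q.1 - q.2.1 = ξ * (q.2.2.1 - q.2.2.2)) = ∅ := by
          apply Finset.filter_false_of_mem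
          intro ξ _ hcon
          rw [hd] at hcon
          simp only [sub_self, mul_zero] at hcon
          exact he (by linear_combination hcon)
        rw [h2]; simp
    · have : (if q.1 = q.2.1 ∧ q.2.2.1 = q.2.2.2 then p else 1) = 1 := by
        simp [hd]
      rw [this]
      apply Finset.card_le_one.mpr
      intro ξ hξ ξ' hξ'
      simp only [Finset.mem_filter] at hξ hξ'
      have hd' : q.2.2.1 - q.2.2.2 ≠ 0 := sub_ne_zero.mpr hd
      have := hξ.2.symm.trans hξ'.2
      exact mul_right_cancel₀ hd' this
  calc ∑ q ∈ (A ×ˢ A ×ˢ A ×ˢ A), (∑ ξ : ZMod p,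
        if q.1 - q.2.1 = ξ * (q.2.2.1 - q.2.2.2) then 1 else 0)
      ≤ ∑ q ∈ (A ×ˢ A ×ˢ A ×ˢ A),
        (if q.1 = q.2.1 ∧ q.2.2.1 = q.2.2.2 then p else 1) := Finset.sum_le_sum hb
    _ ≤ A.card ^ 4 + p * A.card ^ 2 := by
        rw [Finset.sum_ite, Finset.sum_const, Finset.sum_const, smul_eq_mul, smul_eq_mul,
          mul_one]
        have hc1 : ((A ×ˢ A ×ˢ A ×ˢ A).filter
            (fun q => q.1 = q.2.1 ∧ q.2.2.1 = q.2.2.2)).card ≤ A.card ^ 2 := by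
          have : A.card ^ 2 = (A ×ˢ A).card := by rw [Finset.card_product]; ring
          rw [this]
          apply Finset.card_le_card_of_injOn (fun q => (q.1, q.2.2.1))
          · intro q hq
            simp only [Finset.coe_filter, Set.mem_setOf_eq, Finset.mem_filter, Finset.mem_product] at hq
            exact Finset.mem_product.mpr ⟨hq.1.1, hq.1.2.2.1⟩
          · intro q hq q' hq' h
            simp only [Finset.coe_filter, Set.mem_setOf_eq, Finset.mem_product] at hq hq'
            simp only [Prod.mk.injEq] at h
            obtain ⟨h1, h2⟩ := h
            refine Prod.ext h1 (Prod.ext ?_ (Prod.ext h2 ?_))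
            · rw [← hq.2.1, ← hq'.2.1, h1]
            · rw [← hq.2.2, ← hq'.2.2, h2]
        have hc2 : ((A ×ˢ A ×ˢ A ×ˢ A).filter
            (fun q => ¬(q.1 = q.2.1 ∧ q.2.2.1 = q.2.2.2))).card ≤ A.card ^ 4 := by
          calc _ ≤ (A ×ˢ A ×ˢ A ×ˢ A).card := Finset.card_filter_le _ _
            _ = A.card ^ 4 := by simp [Finset.card_product]; ring
        calc ((A ×ˢ A ×ˢ A ×ˢ A).filter
              (fun q => q.1 = q.2.1 ∧ q.2.2.1 = q.2.2.2)).card * p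
              + ((A ×ˢ A ×ˢ A ×ˢ A).filter
              (fun q => ¬(q.1 = q.2.1 ∧ q.2.2.1 = q.2.2.2))).card
            ≤ A.card ^ 2 * p + A.card ^ 4 :=
              Nat.add_le_add (Nat.mul_le_mul_right p hc1) hc2
          _ = A.card ^ 4 + p * A.card ^ 2 := by ring

lemma realA (K a x q : ℝ) (hK0 : 0 < K) (ha0 : 0 < a) (hx0 : 0 ≤ x)
    (hq0 : 0 < q) (hKa : K * a ≤ q / 2)
    (h1 : x * (a ^ 3 / (2 * K)) ≤ q * a ^ 2) : a ^ 2 * x ≤ q ^ 2 := by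
  have h5 : x * a ^ 3 ≤ q * a ^ 2 * (2 * K) := by
    rw [← mul_div_assoc] at h1
    exact (div_le_iff₀ (by positivity)).mp h1
  have h6 := mul_le_mul_of_nonneg_right h5 ha0.le
  have h7 : (2*K*a) * (q*a^2) ≤ q * (q*a^2) :=
    mul_le_mul_of_nonneg_right (by linarith : 2*K*a ≤ q)
      (le_of_lt (mul_pos hq0 (pow_pos ha0 2)))
  have h8 : (a ^ 2 * x) * a ^ 2 ≤ q ^ 2 * a ^ 2 := by nlinarith [h6, h7]
  exact le_of_mul_le_mul_right h8 (pow_pos ha0 2)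

lemma realB (C K a x : ℝ) (hC : 0 < C) (hK0 : 0 < K) (ha0 : 0 < a) (hx0 : 0 ≤ x)
    (h12 : 2*C*K ≤ a ^ ((1:ℝ)/2))
    (hkey : a ^ ((5:ℝ)/2) * a ^ ((1:ℝ)/2) = a ^ 3)
    (h : x * (a ^ 3 / K) ≤ C * (a ^ 3 * x ^ ((3:ℝ)/4) + a ^ ((5:ℝ)/2) * x)) :
    x ≤ 16 * C ^ 4 * K ^ 4 := by
  have h52 : a ^ ((5:ℝ)/2) * (2*C*K) ≤ a ^ 3 := by
    calc a ^ ((5:ℝ)/2) * (2*C*K) ≤ a ^ ((5:ℝ)/2) * a ^ ((1:ℝ)/2) :=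
          mul_le_mul_of_nonneg_left h12 (Real.rpow_nonneg ha0.le _)
      _ = a ^ 3 := hkey
  have hm := mul_le_mul_of_nonneg_right h hK0.le
  have he2 : x * (a ^ 3 / K) * K = x * a ^ 3 := by field_simp
  rw [he2] at hm
  have h52x := mul_le_mul_of_nonneg_right h52 hx0
  have hfin'' : x * a ^ 3 ≤ 2*C*K * x ^ ((3:ℝ)/4) * a ^ 3 := by nlinarith [hm, h52x]
  have hfin2 : x ≤ 2*C*K * x ^ ((3:ℝ)/4) :=
    le_of_mul_le_mul_right hfin'' (pow_pos ha0 3)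
  rcases eq_or_lt_of_le hx0 with h0 | hxpos
  · rw [← h0]; positivity
  · have h34 : (0:ℝ) < x ^ ((3:ℝ)/4) := Real.rpow_pos_of_pos hxpos _
    have hsplit : x = x ^ ((1:ℝ)/4) * x ^ ((3:ℝ)/4) := by
      rw [← Real.rpow_add hxpos]; norm_num
    have hq : x ^ ((1:ℝ)/4) ≤ 2*C*K := by
      apply le_of_mul_le_mul_right _ h34
      calc x ^ ((1:ℝ)/4) * x ^ ((3:ℝ)/4) = x := hsplit.symm
        _ ≤ 2*C*K * x ^ ((3:ℝ)/4) := hfin2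
    have hx14 : (0:ℝ) ≤ x ^ ((1:ℝ)/4) := Real.rpow_nonneg hx0 _
    have hpow : x = (x ^ ((1:ℝ)/4)) ^ (4:ℕ) := by
      rw [← Real.rpow_natCast (x ^ ((1:ℝ)/4)) 4, ← Real.rpow_mul hx0]; norm_num
    have hfin3 : x ≤ (2*C*K) ^ (4:ℕ) := by
      rw [hpow]
      exact pow_le_pow_left₀ hx14 hq 4
    nlinarith [hfin3]

theorem stmt7 (C : ℝ) (hC : 0 < C) :
    ∃ c₁ c₂ C' : ℝ, 0 < c₁ ∧ 0 < c₂ ∧ 0 < C' ∧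
      ∀ (p : ℕ) [Fact p.Prime] (A : Finset (ZMod p)), A.Nonempty →
        (∀ (A' X' : Finset (ZMod p)), (∀ x ∈ X', x ≠ 0) →
            (A'.card : ℝ) ^ 2 * X'.card ≤ (p : ℝ) ^ 2 →
            (∑ x ∈ X', (addEnergy A' x : ℝ)) ≤
              C * ((A'.card : ℝ) ^ 3 * (X'.card : ℝ) ^ ((3 : ℝ) / 4) +
                   (A'.card : ℝ) ^ ((5 : ℝ) / 2) * X'.card)) →
        ∀ K : ℝ, 1 ≤ K → K * A.card ≤ c₁ * p →
          K ≤ c₂ * (A.card : ℝ) ^ ((1 : ℝ) / 2) →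
          ((((univ : Finset (ZMod p)).filter
              (fun ξ : ZMod p => ξ ≠ 0 ∧
                (A.card : ℝ) ^ 3 / K < (addEnergy A ξ : ℝ))).card : ℝ)
            ≤ C' * K ^ 4) := by
  refine ⟨1/2, 1/(2*C), 16*C^4, by norm_num, by positivity, by positivity, ?_⟩
  intro p hp A hA hyp K hK1 hKc1 hKc2
  haveI : NeZero p := ⟨(Fact.out : p.Prime).ne_zero⟩
  have hp0 : (0:ℝ) < p := by exact_mod_cast (Fact.out : p.Prime).pos
  have ha1 : (1:ℝ) ≤ (A.card : ℝ) := by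
    exact_mod_cast Nat.one_le_cast.mpr (Finset.card_pos.mpr hA)
  have ha0 : (0:ℝ) < (A.card : ℝ) := lt_of_lt_of_le one_pos ha1
  have hK0 : (0:ℝ) < K := lt_of_lt_of_le one_pos hK1
  set X : Finset (ZMod p) := (univ : Finset (ZMod p)).filter
      (fun ξ : ZMod p => ξ ≠ 0 ∧ (A.card : ℝ) ^ 3 / K < (addEnergy A ξ : ℝ)) with hXdef
  have hx0 : (0:ℝ) ≤ (X.card : ℝ) := Nat.cast_nonneg _
  have hKa : K * (A.card : ℝ) ≤ (p:ℝ) / 2 := by linarith [hKc1]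
  have hE0 : ∀ ξ : ZMod p, (A.card : ℝ) ^ 4 / p ≤ (addEnergy A ξ : ℝ) := by
    intro ξ
    rw [div_le_iff₀ hp0]
    linarith [le_addEnergy A ξ]
  have hsum : ∑ ξ : ZMod p, ((addEnergy A ξ : ℝ) - (A.card : ℝ) ^ 4 / p)
      ≤ (p:ℝ) * (A.card : ℝ) ^ 2 := by
    have h4 : (∑ ξ : ZMod p, (addEnergy A ξ : ℝ))
        ≤ (A.card : ℝ) ^ 4 + (p:ℝ) * (A.card : ℝ) ^ 2 := by
      calc (∑ ξ : ZMod p, (addEnergy A ξ : ℝ))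
          = ((∑ ξ : ZMod p, addEnergy A ξ : ℕ) : ℝ) := by push_cast; rfl
        _ ≤ ((A.card ^ 4 + p * A.card ^ 2 : ℕ) : ℝ) := by
            exact_mod_cast sum_addEnergy_le A
        _ = (A.card : ℝ) ^ 4 + (p:ℝ) * (A.card : ℝ) ^ 2 := by push_cast; rfl
    rw [Finset.sum_sub_distrib, Finset.sum_const, Finset.card_univ, ZMod.card,
      nsmul_eq_mul]
    have hcl : (p:ℝ) * ((A.card : ℝ) ^ 4 / p) = (A.card : ℝ) ^ 4 := by field_simp
    rw [hcl]
    linarith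
  have hXsum : ∑ ξ ∈ X, ((addEnergy A ξ : ℝ) - (A.card : ℝ) ^ 4 / p)
      ≤ (p:ℝ) * (A.card : ℝ) ^ 2 :=
    le_trans (Finset.sum_le_sum_of_subset_of_nonneg (Finset.subset_univ X)
      (fun ξ _ _ => sub_nonneg.mpr (hE0 ξ))) hsum
  have hmemE : ∀ ξ ∈ X, (A.card : ℝ) ^ 3 / K < (addEnergy A ξ : ℝ) := by
    intro ξ hξ
    exact ((Finset.mem_filter.mp hξ).2).2
  have hlow : ∀ ξ ∈ X, (A.card : ℝ) ^ 3 / (2 * K)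
      ≤ (addEnergy A ξ : ℝ) - (A.card : ℝ) ^ 4 / p := by
    intro ξ hξ
    have h1 := hmemE ξ hξ
    have h2 : (A.card : ℝ) ^ 4 / p ≤ (A.card : ℝ) ^ 3 / (2 * K) := by
      rw [div_le_div_iff₀ hp0 (by positivity : (0:ℝ) < 2*K)]
      nlinarith [hKa, pow_pos ha0 3]
    have h3 : (A.card : ℝ) ^ 3 / (2*K) + (A.card : ℝ) ^ 3 / (2*K)
        = (A.card : ℝ) ^ 3 / K := by field_simp; ring
    linarith
  have hcard1 : (X.card : ℝ) * ((A.card : ℝ) ^ 3 / (2 * K))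
      ≤ (p:ℝ) * (A.card : ℝ) ^ 2 := by
    have h := Finset.card_nsmul_le_sum X _ _ hlow
    rw [nsmul_eq_mul] at h
    exact le_trans h hXsum
  have hxbound : (A.card : ℝ) ^ 2 * (X.card : ℝ) ≤ (p:ℝ) ^ 2 :=
    realA K _ _ _ hK0 ha0 hx0 hp0 hKa hcard1
  have hXne : ∀ y ∈ X, y ≠ 0 := fun y hy => ((Finset.mem_filter.mp hy).2).1
  have happ := hyp A X hXne hxbound
  have hlow2 : (X.card : ℝ) * ((A.card : ℝ) ^ 3 / K)
      ≤ ∑ ξ ∈ X, (addEnergy A ξ : ℝ) := by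
    have h := Finset.card_nsmul_le_sum X _ _ (fun ξ hξ => le_of_lt (hmemE ξ hξ))
    rw [nsmul_eq_mul] at h
    exact h
  have h12 : 2*C*K ≤ (A.card : ℝ) ^ ((1:ℝ)/2) := by
    have h := mul_le_mul_of_nonneg_left hKc2 (le_of_lt (by positivity : (0:ℝ) < 2*C))
    have he : 2*C*(1/(2*C) * (A.card : ℝ) ^ ((1:ℝ)/2)) = (A.card : ℝ) ^ ((1:ℝ)/2) := by
      field_simp
    rw [he] at h
    linarith
  have hkey : (A.card : ℝ) ^ ((5:ℝ)/2) * (A.card : ℝ) ^ ((1:ℝ)/2)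
      = (A.card : ℝ) ^ (3:ℕ) := by
    rw [← Real.rpow_natCast ((A.card : ℝ)) 3, ← Real.rpow_add ha0]
    norm_num
  have := realB C K (A.card : ℝ) (X.card : ℝ) hC hK0 ha0 hx0 h12 hkey
    (le_trans hlow2 happ)
  linarith [this]
end

section
/- Let A ⊆ F_p and let B, C, D each be translates of nonzero dilates of A. Then the number of solutions to (a−b)(c−d) = (a′−b′)(c′−d′) with a,a′ ∈ A, b,b′ ∈ B, c,c′ ∈ C, d,d′ ∈ D is at most 8|A|⁶ + ∑_{ξ ≠ 0} E_+(A, ξA)². -/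
open Finset

namespace Stmt8Aux

variable {p : ℕ} [Fact p.Prime]

/-- number of pairs `(x,y) ∈ X × Y` with `x - ξy = v`. -/
def cnt (X Y : Finset (ZMod p)) (ξ v : ZMod p) : ℕ :=
  ((X ×ˢ Y).filter (fun t => t.1 - ξ * t.2 = v)).card

lemma count_eq (W X Y Z : Finset (ZMod p)) (ξ : ZMod p) :
    ((W ×ˢ X ×ˢ Y ×ˢ Z).filter
      (fun q => q.1 - q.2.1 = ξ * (q.2.2.1 - q.2.2.2))).card
    = ∑ v : ZMod p, cnt W Y ξ v * cnt X Z ξ v := by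
  have hcong : (W ×ˢ X ×ˢ Y ×ˢ Z).filter
      (fun q => q.1 - q.2.1 = ξ * (q.2.2.1 - q.2.2.2))
      = (W ×ˢ X ×ˢ Y ×ˢ Z).filter
      (fun q => q.1 - ξ * q.2.2.1 = q.2.1 - ξ * q.2.2.2) := by
    apply filter_congr
    intro q _
    constructor <;> intro h <;> linear_combination h
  rw [hcong]
  rw [card_eq_sum_card_fiberwise (f := fun q => q.1 - ξ * q.2.2.1)
    (t := (univ : Finset (ZMod p))) (fun q _ => mem_univ _)]
  refine Finset.sum_congr rfl (fun v _ => ?_)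
  rw [cnt, cnt, ← card_product]
  apply Finset.card_nbij' (i := fun q => ((q.1, q.2.2.1), (q.2.1, q.2.2.2)))
    (j := fun t => (t.1.1, t.2.1, t.1.2, t.2.2))
  · intro q hq
    simp only [mem_coe, mem_filter, mem_product] at hq ⊢
    obtain ⟨⟨⟨h1, h2, h3, h4⟩, hc⟩, hv⟩ := hq
    refine ⟨⟨⟨h1, h3⟩, hv⟩, ⟨h2, h4⟩, ?_⟩
    rw [← hc]; exact hv
  · intro t ht
    simp only [mem_coe, mem_filter, mem_product] at ht ⊢
    obtain ⟨⟨⟨h1, h3⟩, hv1⟩, ⟨h2, h4⟩, hv2⟩ := ht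
    exact ⟨⟨⟨h1, h2, h3, h4⟩, by rw [hv1, hv2]⟩, hv1⟩
  · intro q _; rfl
  · intro t _; rfl

lemma energy_eq (X : Finset (ZMod p)) (ξ : ZMod p) :
    _root_.addEnergy X ξ = ∑ v : ZMod p, cnt X X ξ v ^ 2 := by
  unfold _root_.addEnergy
  rw [count_eq]
  exact Finset.sum_congr rfl (fun v _ => (sq _).symm)

lemma energy_dilate (A X : Finset (ZMod p)) (c lam : ZMod p) (hlam : lam ≠ 0)
    (hX : X = A.image fun a => c + lam * a) (ξ : ZMod p) :
    _root_.addEnergy X ξ = _root_.addEnergy A ξ := by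
  subst hX
  unfold _root_.addEnergy
  apply Finset.card_nbij'
    (i := fun q => (lam⁻¹ * (q.1 - c), lam⁻¹ * (q.2.1 - c),
      lam⁻¹ * (q.2.2.1 - c), lam⁻¹ * (q.2.2.2 - c)))
    (j := fun q => (c + lam * q.1, c + lam * q.2.1, c + lam * q.2.2.1, c + lam * q.2.2.2))
  · intro q hq
    simp only [mem_coe, mem_filter, mem_product, mem_image] at hq ⊢
    obtain ⟨⟨h1, h2, h3, h4⟩, hc⟩ := hq
    have key : ∀ x : ZMod p, (∃ a ∈ A, c + lam * a = x) → lam⁻¹ * (x - c) ∈ A := by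
      rintro x ⟨a, ha, rfl⟩
      have : lam⁻¹ * (c + lam * a - c) = a := by field_simp; ring
      rwa [this]
    refine ⟨⟨key _ h1, key _ h2, key _ h3, key _ h4⟩, ?_⟩
    field_simp
    linear_combination hc
  · intro q hq
    simp only [mem_coe, mem_filter, mem_product, mem_image] at hq ⊢
    obtain ⟨⟨h1, h2, h3, h4⟩, hc⟩ := hq
    refine ⟨⟨⟨_, h1, rfl⟩, ⟨_, h2, rfl⟩, ⟨_, h3, rfl⟩, ⟨_, h4, rfl⟩⟩, ?_⟩
    linear_combination lam * hc
  · intro q _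
    have key : ∀ x : ZMod p, c + lam * (lam⁻¹ * (x - c)) = x := by
      intro x; field_simp; ring
    exact Prod.ext (key _) (Prod.ext (key _) (Prod.ext (key _) (key _)))
  · intro q _
    have key : ∀ x : ZMod p, lam⁻¹ * (c + lam * x - c) = x := by
      intro x; field_simp; ring
    exact Prod.ext (key _) (Prod.ext (key _) (Prod.ext (key _) (key _)))

lemma sum_mul_le (f g : ZMod p → ℕ) (E : ℕ) (hf : ∑ v : ZMod p, f v ^ 2 = E)
    (hg : ∑ v : ZMod p, g v ^ 2 = E) : ∑ v : ZMod p, f v * g v ≤ E := by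
  have h := sum_mul_sq_le_sq_mul_sq (univ : Finset (ZMod p)) (fun v => (f v : ℕ)) g
  rw [hf, hg, ← sq] at h
  exact le_of_pow_le_pow_left₀ two_ne_zero (Nat.zero_le _) h

/-- The main per-ξ bound. -/
lemma pair_bound (A W X : Finset (ZMod p))
    (hW : ∃ c lam : ZMod p, lam ≠ 0 ∧ W = A.image (fun a => c + lam * a))
    (hX : ∃ c lam : ZMod p, lam ≠ 0 ∧ X = A.image (fun a => c + lam * a))
    (ξ : ZMod p) :
    ((W ×ˢ X ×ˢ W ×ˢ X).filter
      (fun q => q.1 - q.2.1 = ξ * (q.2.2.1 - q.2.2.2))).card ≤ _root_.addEnergy A ξ := by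
  obtain ⟨cW, lW, hlW, hWe⟩ := hW
  obtain ⟨cX, lX, hlX, hXe⟩ := hX
  rw [count_eq]
  exact sum_mul_le _ _ _
    (by rw [← energy_eq, energy_dilate A W cW lW hlW hWe])
    (by rw [← energy_eq, energy_dilate A X cX lX hlX hXe])

end Stmt8Aux

theorem stmt8 {p : ℕ} [Fact p.Prime] (A B C D : Finset (ZMod p))
    (hB : ∃ c lam : ZMod p, lam ≠ 0 ∧ B = A.image (fun a => c + lam * a))
    (hC : ∃ c lam : ZMod p, lam ≠ 0 ∧ C = A.image (fun a => c + lam * a))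
    (hD : ∃ c lam : ZMod p, lam ≠ 0 ∧ D = A.image (fun a => c + lam * a)) :
    (((A ×ˢ B ×ˢ C ×ˢ D) ×ˢ (A ×ˢ B ×ˢ C ×ˢ D)).filter
        (fun q => (q.1.1 - q.1.2.1) * (q.1.2.2.1 - q.1.2.2.2) =
          (q.2.1 - q.2.2.1) * (q.2.2.2.1 - q.2.2.2.2))).card
      ≤ 8 * A.card ^ 6 +
        ∑ ξ ∈ (univ : Finset (ZMod p)).filter (· ≠ 0), (addEnergy A ξ) ^ 2 := by
  classical
  have hA : ∃ c lam : ZMod p, lam ≠ 0 ∧ A = A.image (fun a => c + lam * a) :=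
    ⟨0, 1, one_ne_zero, by simp⟩
  obtain ⟨cB, lB, hlB, hBe⟩ := hB
  obtain ⟨cC, lC, hlC, hCe⟩ := hC
  obtain ⟨cD, lD, hlD, hDe⟩ := hD
  have hinj : ∀ (c lam : ZMod p), lam ≠ 0 →
      Function.Injective (fun a : ZMod p => c + lam * a) := by
    intro c lam hl a b h
    simp only at h
    exact mul_left_cancel₀ hl (add_left_cancel h)
  have hBcard : B.card = A.card := by
    rw [hBe]; exact card_image_of_injective _ (hinj _ _ hlB)
  have hCcard : C.card = A.card := by
    rw [hCe]; exact card_image_of_injective _ (hinj _ _ hlC)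
  have hDcard : D.card = A.card := by
    rw [hDe]; exact card_image_of_injective _ (hinj _ _ hlD)
  set Ω : Finset (ZMod p × ZMod p × ZMod p × ZMod p) := A ×ˢ B ×ˢ C ×ˢ D with hΩ
  set T := (Ω ×ˢ Ω).filter
      (fun q => (q.1.1 - q.1.2.1) * (q.1.2.2.1 - q.1.2.2.2) =
        (q.2.1 - q.2.2.1) * (q.2.2.2.1 - q.2.2.2.2)) with hT
  -- split according to whether the (common) product is zero
  have hsplit : (T.filter fun q => (q.1.1 - q.1.2.1) * (q.1.2.2.1 - q.1.2.2.2) = 0).card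
      + (T.filter fun q => ¬ (q.1.1 - q.1.2.1) * (q.1.2.2.1 - q.1.2.2.2) = 0).card
      = T.card := card_filter_add_card_filter_not _
  -- zero part
  have hZcard : (Ω.filter fun t => (t.1 - t.2.1) * (t.2.2.1 - t.2.2.2) = 0).card
      ≤ 2 * A.card ^ 3 := by
    have hsub : (Ω.filter fun t => (t.1 - t.2.1) * (t.2.2.1 - t.2.2.2) = 0) ⊆
        (Ω.filter fun t => t.1 = t.2.1) ∪ (Ω.filter fun t => t.2.2.1 = t.2.2.2) := by
      intro t ht
      simp only [mem_filter, mem_union] at ht ⊢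
      obtain ⟨hm, h0⟩ := ht
      rcases mul_eq_zero.mp h0 with h | h
      · exact Or.inl ⟨hm, sub_eq_zero.mp h⟩
      · exact Or.inr ⟨hm, sub_eq_zero.mp h⟩
    refine (card_le_card hsub).trans ((card_union_le _ _).trans ?_)
    have h1 : (Ω.filter fun t => t.1 = t.2.1).card ≤ A.card ^ 3 := by
      have hle := card_le_card_of_injOn (f := fun t => (t.1, t.2.2))
        (s := Ω.filter fun t => t.1 = t.2.1) (t := A ×ˢ C ×ˢ D)
        (fun t ht => by
          simp only [mem_coe, hΩ, mem_filter, mem_product] at ht ⊢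
          exact ⟨ht.1.1, ht.1.2.2⟩)
        (by
          rintro ⟨a, b, c, d⟩ ht ⟨a', b', c', d'⟩ ht' h
          simp only [mem_coe, hΩ, mem_filter, mem_product] at ht ht'
          simp only [Prod.mk.injEq] at h ⊢
          exact ⟨h.1, by rw [← ht.2, ← ht'.2, h.1], h.2⟩)
      calc (Ω.filter fun t => t.1 = t.2.1).card ≤ (A ×ˢ C ×ˢ D).card := hle
        _ = A.card ^ 3 := by
            simp only [card_product, hCcard, hDcard]; ring
    have h2 : (Ω.filter fun t => t.2.2.1 = t.2.2.2).card ≤ A.card ^ 3 := by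
      have hle := card_le_card_of_injOn (f := fun t => (t.1, t.2.1, t.2.2.1))
        (s := Ω.filter fun t => t.2.2.1 = t.2.2.2) (t := A ×ˢ B ×ˢ C)
        (fun t ht => by
          simp only [mem_coe, hΩ, mem_filter, mem_product] at ht ⊢
          exact ⟨ht.1.1, ht.1.2.1, ht.1.2.2.1⟩)
        (by
          rintro ⟨a, b, c, d⟩ ht ⟨a', b', c', d'⟩ ht' h
          simp only [mem_coe, hΩ, mem_filter, mem_product] at ht ht'
          simp only [Prod.mk.injEq] at h ⊢
          exact ⟨h.1, h.2.1, h.2.2, by rw [← ht.2, ← ht'.2, h.2.2]⟩)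
      calc (Ω.filter fun t => t.2.2.1 = t.2.2.2).card ≤ (A ×ˢ B ×ˢ C).card := hle
        _ = A.card ^ 3 := by
            simp only [card_product, hBcard, hCcard]; ring
    omega
  have hzero : (T.filter fun q => (q.1.1 - q.1.2.1) * (q.1.2.2.1 - q.1.2.2.2) = 0).card
      ≤ 8 * A.card ^ 6 := by
    have hsub : (T.filter fun q => (q.1.1 - q.1.2.1) * (q.1.2.2.1 - q.1.2.2.2) = 0) ⊆
        (Ω.filter fun t => (t.1 - t.2.1) * (t.2.2.1 - t.2.2.2) = 0) ×ˢ
        (Ω.filter fun t => (t.1 - t.2.1) * (t.2.2.1 - t.2.2.2) = 0) := by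
      intro q hq
      simp only [hT, mem_filter, mem_product] at hq ⊢
      obtain ⟨⟨⟨h1, h2⟩, heq⟩, h0⟩ := hq
      exact ⟨⟨h1, h0⟩, h2, heq.symm.trans h0⟩
    calc (T.filter fun q => (q.1.1 - q.1.2.1) * (q.1.2.2.1 - q.1.2.2.2) = 0).card
        ≤ _ := card_le_card hsub
      _ = (Ω.filter fun t => (t.1 - t.2.1) * (t.2.2.1 - t.2.2.2) = 0).card *
          (Ω.filter fun t => (t.1 - t.2.1) * (t.2.2.1 - t.2.2.2) = 0).card :=
          card_product _ _
      _ ≤ (2 * A.card ^ 3) * (2 * A.card ^ 3) := Nat.mul_le_mul hZcard hZcard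
      _ ≤ 8 * A.card ^ 6 := by
          have : (2 * A.card ^ 3) * (2 * A.card ^ 3) = 4 * A.card ^ 6 := by ring
          rw [this]
          have h6 := Nat.zero_le (A.card ^ 6)
          omega
  -- nonzero part
  have hnz : (T.filter fun q => ¬ (q.1.1 - q.1.2.1) * (q.1.2.2.1 - q.1.2.2.2) = 0).card
      ≤ ∑ ξ ∈ (univ : Finset (ZMod p)).filter (· ≠ 0), (addEnergy A ξ) ^ 2 := by
    rw [card_eq_sum_card_fiberwise
      (f := fun q => (q.1.1 - q.1.2.1) * (q.2.1 - q.2.2.1)⁻¹)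
      (t := (univ : Finset (ZMod p)).filter (· ≠ 0))
      (by
        rintro ⟨⟨a, b, c, d⟩, a', b', c', d'⟩ hq
        simp only [mem_coe, hT, mem_filter, mem_product] at hq
        obtain ⟨⟨_, heq⟩, h0⟩ := hq
        have h1 : a - b ≠ 0 := left_ne_zero_of_mul h0
        have h2 : a' - b' ≠ 0 := left_ne_zero_of_mul (heq ▸ h0)
        simp only [mem_coe, mem_filter, mem_univ, true_and]
        exact mul_ne_zero h1 (inv_ne_zero h2))]
    refine Finset.sum_le_sum (fun ξ hξ => ?_)
    have hξ0 : ξ ≠ 0 := by simpa using hξ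
    -- the fiber injects into a product of two counting sets
    have hle := card_le_card_of_injOn
      (f := fun q : (ZMod p × ZMod p × ZMod p × ZMod p) × (ZMod p × ZMod p × ZMod p × ZMod p) =>
        ((q.1.1, q.1.2.1, q.2.1, q.2.2.1), (q.2.2.2.1, q.2.2.2.2, q.1.2.2.1, q.1.2.2.2)))
      (s := (T.filter fun q => ¬ (q.1.1 - q.1.2.1) * (q.1.2.2.1 - q.1.2.2.2) = 0).filter
        (fun q => (q.1.1 - q.1.2.1) * (q.2.1 - q.2.2.1)⁻¹ = ξ))
      (t := ((A ×ˢ B ×ˢ A ×ˢ B).filter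
          (fun t => t.1 - t.2.1 = ξ * (t.2.2.1 - t.2.2.2))) ×ˢ
        ((C ×ˢ D ×ˢ C ×ˢ D).filter
          (fun t => t.1 - t.2.1 = ξ * (t.2.2.1 - t.2.2.2))))
      (by
        rintro ⟨⟨a, b, c, d⟩, a', b', c', d'⟩ hq
        simp only [mem_coe, hT, hΩ, mem_filter, mem_product] at hq
        obtain ⟨⟨⟨⟨⟨ha, hb, hc, hd⟩, ⟨ha', hb', hc', hd'⟩⟩, heq⟩, h0⟩, hr⟩ := hq
        have h1 : a - b ≠ 0 := left_ne_zero_of_mul h0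
        have h2 : a' - b' ≠ 0 := left_ne_zero_of_mul (heq ▸ h0)
        have key1 : a - b = ξ * (a' - b') := by
          rw [← hr, mul_assoc, inv_mul_cancel₀ h2, mul_one]
        have key2 : c' - d' = ξ * (c - d) :=
          mul_left_cancel₀ h2 (by linear_combination (c - d) * key1 - heq)
        simp only [mem_coe, mem_filter, mem_product]
        exact ⟨⟨⟨ha, hb, ha', hb'⟩, key1⟩, ⟨hc', hd', hc, hd⟩, key2⟩)
      (by
        rintro ⟨⟨a, b, c, d⟩, a', b', c', d'⟩ _ ⟨⟨e, f, g, h⟩, e', f', g', h'⟩ _ hfe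
        simp only [Prod.mk.injEq] at hfe ⊢
        tauto)
    calc ((T.filter fun q => ¬ (q.1.1 - q.1.2.1) * (q.1.2.2.1 - q.1.2.2.2) = 0).filter
          (fun q => (q.1.1 - q.1.2.1) * (q.2.1 - q.2.2.1)⁻¹ = ξ)).card
        ≤ _ := hle
      _ = ((A ×ˢ B ×ˢ A ×ˢ B).filter
            (fun t => t.1 - t.2.1 = ξ * (t.2.2.1 - t.2.2.2))).card *
          ((C ×ˢ D ×ˢ C ×ˢ D).filter
            (fun t => t.1 - t.2.1 = ξ * (t.2.2.1 - t.2.2.2))).card := card_product _ _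
      _ ≤ addEnergy A ξ * addEnergy A ξ :=
          Nat.mul_le_mul
            (Stmt8Aux.pair_bound A A B hA ⟨cB, lB, hlB, hBe⟩ ξ)
            (Stmt8Aux.pair_bound A C D ⟨cC, lC, hlC, hCe⟩ ⟨cD, lD, hlD, hDe⟩ ξ)
      _ = (addEnergy A ξ) ^ 2 := (sq _).symm
  omega
end
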